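/- Let β ∈ (0, π) and κ, χ, m, δ, a ∈ ℝ satisfy: 0 < χ, χ ≤ |β − π/2|, χ ≤ π/2 − |β − π/2|, χ ≤ 1/10; m > 0 and |κ| ≤ 1 − m/30; 0 ≤ δ ≤ χ·m/180; and |a − π/2| ≤ |β − π/2| + (3/2)·δ. Then |cos a · sin β · κ − sin a · cos β| ≥ sin β · χ · m / 120. (The derivative lower bound at the analytic core of the proof of Lemma B.2, used in the conditional sector-test analysis.) -/

import Mathlib

open Real

set_option maxHeartbeats 1000000

lemma aux_num (χ : ℝ) (h0 : 0 < χ) (h3 : χ ≤ 1/10) :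
    9*χ/10 ≤ (χ - χ^3/4) * (1 - χ^2/2) := by
  nlinarith [sq_nonneg χ, pow_pos h0 5, mul_pos h0 h0, sq_nonneg (χ^2)]

lemma abs_sin_eq (s : ℝ) (h : |s| ≤ Real.pi) : |Real.sin s| = Real.sin |s| := by
  rcases le_or_gt 0 s with h1 | h1
  · rw [abs_of_nonneg h1] at h ⊢
    exact abs_of_nonneg (Real.sin_nonneg_of_nonneg_of_le_pi h1 h)
  · rw [abs_of_neg h1] at h ⊢
    have h2 : 0 ≤ Real.sin (-s) := Real.sin_nonneg_of_nonneg_of_le_pi (by linarith) h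
    rw [Real.sin_neg] at h2
    rw [Real.sin_neg, abs_of_nonpos (by linarith)]

/-- The derivative lower bound at the analytic core of the proof of Lemma B.2. -/
theorem derivative_lower_bound (β κ χ m δ a : ℝ)
    (hβ : β ∈ Set.Ioo 0 Real.pi)
    (hχ0 : 0 < χ) (hχ1 : χ ≤ |β - Real.pi / 2|) (hχ2 : χ ≤ Real.pi / 2 - |β - Real.pi / 2|)
    (hχ3 : χ ≤ 1 / 10)
    (hm : 0 < m) (hκ : |κ| ≤ 1 - m / 30)
    (hδ0 : 0 ≤ δ) (hδ1 : δ ≤ χ * m / 180)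
    (ha : |a - Real.pi / 2| ≤ |β - Real.pi / 2| + (3 / 2) * δ) :
    Real.sin β * χ * m / 120 ≤ |Real.cos a * Real.sin β * κ - Real.sin a * Real.cos β| := by
  obtain ⟨hβ0, hβπ⟩ := hβ
  have hπ := Real.pi_pos
  set s := β - Real.pi / 2 with hs
  set t := a - Real.pi / 2 with ht
  have hm30 : m ≤ 30 := by
    have := abs_nonneg κ; nlinarith
  set u : ℝ := (3 / 2) * δ with hu
  have hu0 : 0 ≤ u := by positivity
  have hu1 : u ≤ χ * m / 120 := by rw [hu]; linarith
  have huχ : u ≤ χ / 4 := by nlinarith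
  have hS1 : χ ≤ |s| := hχ1
  have hS2 : |s| ≤ Real.pi / 2 - χ := by linarith
  have hSu : |s| + u ≤ Real.pi / 2 := by linarith
  have hT : |t| ≤ |s| + u := ha
  have hT2 : |t| ≤ Real.pi / 2 := le_trans hT hSu
  -- trig rewrites
  have hβeq : β = Real.pi / 2 + s := by rw [hs]; ring
  have haeq : a = Real.pi / 2 + t := by rw [ht]; ring
  have hsinβ : Real.sin β = Real.cos s := by
    rw [hβeq, Real.sin_add, Real.sin_pi_div_two, Real.cos_pi_div_two]; ring
  have hcosβ : Real.cos β = -Real.sin s := by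
    rw [hβeq, Real.cos_add, Real.sin_pi_div_two, Real.cos_pi_div_two]; ring
  have hsina : Real.sin a = Real.cos t := by
    rw [haeq, Real.sin_add, Real.sin_pi_div_two, Real.cos_pi_div_two]; ring
  have hcosa : Real.cos a = -Real.sin t := by
    rw [haeq, Real.cos_add, Real.sin_pi_div_two, Real.cos_pi_div_two]; ring
  rw [hsinβ, hcosβ, hsina, hcosa]
  have hE : -Real.sin t * Real.cos s * κ - Real.cos t * -Real.sin s
      = Real.sin s * Real.cos t - κ * Real.sin t * Real.cos s := by ring
  rw [hE]
  -- basic nonnegativity facts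
  have hcoss : Real.cos s = Real.cos |s| := (Real.cos_abs s).symm
  have hcoss0 : 0 ≤ Real.cos |s| :=
    Real.cos_nonneg_of_mem_Icc ⟨by linarith [abs_nonneg s], by linarith⟩
  have hcost0 : 0 ≤ Real.cos t :=
    Real.cos_nonneg_of_mem_Icc ⟨by linarith [abs_le.mp hT2 |>.1], (abs_le.mp hT2).2⟩
  have hsinS0 : 0 ≤ Real.sin |s| :=
    Real.sin_nonneg_of_nonneg_of_le_pi (abs_nonneg s) (by linarith)
  have hsinSu0 : 0 ≤ Real.sin (|s| + u) :=
    Real.sin_nonneg_of_nonneg_of_le_pi (by linarith [abs_nonneg s]) (by linarith)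
  -- step 1 : triangle inequality
  have step1 : Real.sin |s| * Real.cos t - |κ| * Real.sin |t| * Real.cos |s|
      ≤ |Real.sin s * Real.cos t - κ * Real.sin t * Real.cos s| := by
    have h1 : |Real.sin s * Real.cos t| = Real.sin |s| * Real.cos t := by
      rw [abs_mul, abs_sin_eq s (by linarith), abs_of_nonneg hcost0]
    have h2 : |κ * Real.sin t * Real.cos s| = |κ| * Real.sin |t| * Real.cos |s| := by
      rw [abs_mul, abs_mul, abs_sin_eq t (by linarith), hcoss, abs_of_nonneg hcoss0]
    calc Real.sin |s| * Real.cos t - |κ| * Real.sin |t| * Real.cos |s|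
        = |Real.sin s * Real.cos t| - |κ * Real.sin t * Real.cos s| := by rw [h1, h2]
      _ ≤ |Real.sin s * Real.cos t - κ * Real.sin t * Real.cos s| := abs_sub_abs_le_abs_sub _ _
  -- step 2 : monotonicity bounds
  have hcostL : Real.cos (|s| + u) ≤ Real.cos t := by
    rw [← Real.cos_abs t]
    exact Real.cos_le_cos_of_nonneg_of_le_pi (abs_nonneg t) (by linarith) hT
  have hsintU : Real.sin |t| ≤ Real.sin (|s| + u) :=
    Real.sin_le_sin_of_le_of_le_pi_div_two (by linarith [abs_nonneg t]) hSu hT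
  have hsinSU : Real.sin |s| ≤ Real.sin (|s| + u) :=
    Real.sin_le_sin_of_le_of_le_pi_div_two (by linarith [abs_nonneg s]) hSu (by linarith)
  have step2 : Real.sin |s| * Real.cos (|s| + u)
      - (1 - m / 30) * Real.sin (|s| + u) * Real.cos |s|
      ≤ Real.sin |s| * Real.cos t - |κ| * Real.sin |t| * Real.cos |s| := by
    have h1 : Real.sin |s| * Real.cos (|s| + u) ≤ Real.sin |s| * Real.cos t :=
      mul_le_mul_of_nonneg_left hcostL hsinS0
    have hsint0 : 0 ≤ Real.sin |t| :=
      Real.sin_nonneg_of_nonneg_of_le_pi (abs_nonneg t) (by linarith)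
    have h2 : |κ| * Real.sin |t| * Real.cos |s|
        ≤ (1 - m / 30) * Real.sin (|s| + u) * Real.cos |s| := by
      have hmm : |κ| * Real.sin |t| ≤ (1 - m / 30) * Real.sin (|s| + u) :=
        mul_le_mul hκ hsintU hsint0 (by linarith)
      exact mul_le_mul_of_nonneg_right hmm hcoss0
    linarith
  -- step 3 : expand sin difference
  have step3 : Real.sin |s| * Real.cos (|s| + u)
      - (1 - m / 30) * Real.sin (|s| + u) * Real.cos |s|
      = -Real.sin u + (m / 30) * Real.sin (|s| + u) * Real.cos |s| := by
    have := Real.sin_sub (|s|) (|s| + u)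
    have h2 : |s| - (|s| + u) = -u := by ring
    rw [h2, Real.sin_neg] at this
    linear_combination -this
  -- step 4 : final numeric bound
  have hsinu : Real.sin u ≤ u := Real.sin_le hu0
  have hprod : Real.sin χ * Real.cos χ ≤ Real.sin |s| * Real.cos |s| := by
    have e1 : Real.sin χ * Real.cos χ = Real.sin (2 * χ) / 2 := by
      rw [Real.sin_two_mul]; ring
    have e2 : Real.sin |s| * Real.cos |s| = Real.sin (2 * |s|) / 2 := by
      rw [Real.sin_two_mul]; ring
    rw [e1, e2]
    have h2S : Real.sin (2 * χ) ≤ Real.sin (2 * |s|) := by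
      rcases le_or_gt (2 * |s|) (Real.pi / 2) with h | h
      · exact Real.sin_le_sin_of_le_of_le_pi_div_two (by linarith) h (by linarith)
      · have : Real.sin (2 * |s|) = Real.sin (Real.pi - 2 * |s|) := by
          rw [Real.sin_pi_sub]
        rw [this]
        exact Real.sin_le_sin_of_le_of_le_pi_div_two (by linarith) (by linarith) (by linarith)
    linarith
  have hsinχ : χ - χ ^ 3 / 4 < Real.sin χ := by
    have := Real.sin_gt_sub_cube hχ0; nlinarith [pow_pos hχ0 3]
  have hcosχ : 1 - χ ^ 2 / 2 ≤ Real.cos χ := Real.one_sub_sq_div_two_le_cos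
  have hsc : 9 * χ / 10 ≤ Real.sin χ * Real.cos χ := by
    have hb : (χ - χ ^ 3 / 4) * (1 - χ ^ 2 / 2) ≤ Real.sin χ * Real.cos χ :=
      mul_le_mul (le_of_lt hsinχ) hcosχ (by nlinarith [sq_nonneg χ]) (by nlinarith [sq_nonneg χ])
    linarith [aux_num χ hχ0 hχ3]
  have hcosS1 : Real.cos |s| ≤ 1 := Real.cos_le_one _
  have hsinSuS : Real.sin |s| * Real.cos |s| ≤ Real.sin (|s| + u) * Real.cos |s| :=
    mul_le_mul_of_nonneg_right hsinSU hcoss0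
  have step4 : Real.cos |s| * χ * m / 120
      ≤ -Real.sin u + (m / 30) * Real.sin (|s| + u) * Real.cos |s| := by
    have h1 : (m / 30) * (9 * χ / 10) ≤ (m / 30) * (Real.sin (|s| + u) * Real.cos |s|) := by
      apply mul_le_mul_of_nonneg_left _ (by positivity)
      linarith
    nlinarith
  calc Real.cos s * χ * m / 120 = Real.cos |s| * χ * m / 120 := by rw [hcoss]
    _ ≤ -Real.sin u + (m / 30) * Real.sin (|s| + u) * Real.cos |s| := step4
    _ = Real.sin |s| * Real.cos (|s| + u)
        - (1 - m / 30) * Real.sin (|s| + u) * Real.cos |s| := step3.symm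
    _ ≤ Real.sin |s| * Real.cos t - |κ| * Real.sin |t| * Real.cos |s| := step2
    _ ≤ |Real.sin s * Real.cos t - κ * Real.sin t * Real.cos s| := step1
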